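/- Let G be a finite purely non-abelian group and let f, g ∈ Hom(G, Z(G)) satisfy f ∘ g = g (as maps from G to G). Then g is the trivial homomorphism. -/

import Mathlib

/-- In a finite monoid, every element has an idempotent positive power. -/
lemma exists_idem_pow {M : Type*} [Monoid M] [Finite M] (a : M) :
    ∃ n : ℕ, 0 < n ∧ a ^ n * a ^ n = a ^ n := by
  obtain ⟨i, j, hij, hpow⟩ := Finite.exists_ne_map_eq_of_infinite (fun n : ℕ => a ^ n)
  wlog hlt : i < j generalizing i j
  · exact this j i hij.symm hpow.symm (by omega)
  set d := j - i with hd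
  have hdpos : 0 < d := by omega
  have key : ∀ k m : ℕ, i ≤ m → a ^ (m + k * d) = a ^ m := by
    intro k
    induction k with
    | zero => simp
    | succ k ih =>
      intro m hm
      have h1 : a ^ (m + d) = a ^ m := by
        have : a ^ (m + d) = a ^ (m - i) * a ^ j := by
          rw [← pow_add]; congr 1; omega
        rw [this, ← hpow, ← pow_add]
        congr 1; omega
      calc a ^ (m + (k+1) * d) = a ^ (m + d + k * d) := by ring_nf
        _ = a ^ (m + d) := ih _ (by omega)
        _ = a ^ m := h1
  refine ⟨(i + 1) * d, by positivity, ?_⟩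
  rw [← pow_add]
  exact key (i + 1) ((i + 1) * d) (by nlinarith)

/-- A finite group `G` is purely non-abelian if it has no nontrivial abelian direct
factor: whenever `G` is the internal direct product of two normal subgroups `A` and `B`
with `A` abelian, `A` is trivial. -/
def PurelyNonAbelian (G : Type*) [Group G] : Prop :=
  ∀ A B : Subgroup G, A.Normal → B.Normal → IsCompl A B →
    (∀ a b : A, a * b = b * a) → A = ⊥

/-- If `G` is a finite purely non-abelian group and `f, g ∈ Hom(G, Z(G))` satisfy
`f ∘ g = g`, then `g` is the trivial homomorphism. -/
theorem trivial_of_comp_fixed (G : Type*) [Group G] [Finite G]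
    (hG : PurelyNonAbelian G) (f g : G →* G)
    (hf : ∀ x : G, f x ∈ Subgroup.center G)
    (hg : ∀ x : G, g x ∈ Subgroup.center G)
    (h : ∀ x : G, f (g x) = g x) :
    ∀ x : G, g x = 1 := by
  have hfin : Finite (Monoid.End G) := FunLike.finite _
  set E : Monoid.End G := f with hE
  obtain ⟨n, hn, hidem⟩ := exists_idem_pow E
  set e : G →* G := (E ^ n : Monoid.End G) with he
  have hecoe : ∀ x : G, e x = (⇑f)^[n] x := fun _ => rfl
  -- e is idempotent as a function
  have heidem : ∀ x : G, e (e x) = e x := by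
    intro x
    have h1 := congrArg (fun φ : Monoid.End G => φ x) hidem
    change e (e x) = e x at h1
    simpa [hecoe] using h1
  -- e maps into the center
  have hecent : ∀ x : G, e x ∈ Subgroup.center G := by
    intro x
    obtain ⟨m, rfl⟩ : ∃ m, n = m + 1 := ⟨n - 1, by omega⟩
    rw [hecoe, Function.iterate_succ_apply']
    exact hf _
  -- e fixes the image of g
  have hefix : ∀ x : G, e (g x) = g x := by
    intro x
    rw [hecoe]
    clear hidem hn he hecoe heidem hecent
    induction n with
    | zero => rfl
    | succ m ih => rw [Function.iterate_succ_apply', ih, h x]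
  set A : Subgroup G := e.range with hA
  set B : Subgroup G := e.ker with hB
  have hAcent : ∀ a ∈ A, a ∈ Subgroup.center G := by
    rintro a ⟨y, rfl⟩; exact hecent y
  have hAnorm : A.Normal := by
    constructor
    intro a ha gg
    have hc : gg * a = a * gg := (Subgroup.mem_center_iff.mp (hAcent a ha)) gg
    have : gg * a * gg⁻¹ = a := by rw [hc, mul_inv_cancel_right]
    rwa [this]
  have hBnorm : B.Normal := e.normal_ker
  have hcompl : IsCompl A B := by
    constructor
    · rw [disjoint_iff, eq_bot_iff]
      rintro x ⟨⟨y, rfl⟩, hx2⟩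
      have hx2' : e (e y) = 1 := hx2
      rw [heidem] at hx2'
      simp [hx2']
    · rw [codisjoint_iff, eq_top_iff]
      intro x _
      have h1 : e x ∈ A := ⟨x, rfl⟩
      have h2 : (e x)⁻¹ * x ∈ B := by
        have : e ((e x)⁻¹ * x) = 1 := by
          rw [map_mul, map_inv, heidem]; group
        exact this
      have hx : x = (e x) * ((e x)⁻¹ * x) := by group
      rw [hx]
      exact Subgroup.mul_mem_sup h1 h2
  have hab : ∀ a b : A, a * b = b * a := by
    intro a b
    ext
    simp only [Subgroup.coe_mul]
    exact ((Subgroup.mem_center_iff.mp (hAcent a a.2)) b).symm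
  have hAbot : A = ⊥ := hG A B hAnorm hBnorm hcompl hab
  intro x
  have hmem : g x ∈ A := ⟨g x, hefix x⟩
  rw [hAbot] at hmem
  simpa using hmem
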